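/- Let u, v, u', v' form a Tie(u; v, u', v') with d(u,v) ≤ 1, d(u',v') ≤ 1, and let w be a point with d(u,w) ≤ 1 and ∠(w u v) ≤ 5π/6 such that segment u'u crosses segment wv. Then d(w,u') ≤ 2. -/

import Mathlib

set_option maxHeartbeats 2000000

open EuclideanGeometry Real

abbrev Pt := EuclideanSpace ℝ (Fin 2)

/-- Two segments cross: they meet at a point interior to both. -/
def Crosses (a b c d : Pt) : Prop :=
  ∃ p : Pt, p ∈ openSegment ℝ a b ∧ p ∈ openSegment ℝ c d

/-- Tie(a; b, c, d). -/
def Tie (a b c d : Pt) : Prop :=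
  Crosses a b c d ∧ dist a c > dist a b ∧ dist a d > dist a b ∧ dist a c > dist c d


private lemma cubic_core (m s : ℝ) (hm : 0 ≤ m) (hm1 : m ≤ 1/2) (h3 : s^2 = 3) (hs : 1 ≤ s) :
    (1 - 2*m) * (s*m + m^2) ≤ 2 - s := by
  have hs' : s ≤ 17321/10000 := by nlinarith
  have hs'' : 1732/1000 ≤ s := by nlinarith
  nlinarith [mul_nonneg hm (sq_nonneg (m - 27/100)), mul_nonneg (by linarith : (0:ℝ) ≤ 1/2 - m) (sq_nonneg (m - 27/100)), mul_nonneg hm (sq_nonneg (m - 1/4)), mul_nonneg (by linarith : (0:ℝ) ≤ 1/2 - m) (sq_nonneg (m - 1/4))]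

private lemma claim2 (a m s : ℝ) (ha : 0 ≤ a) (ha1 : a ≤ 1) (hm : 0 ≤ m) (hm1 : m ≤ 1)
    (hB : 0 ≤ 1 - 2*a*m) (h3 : s^2 = 3) (hs : 1 ≤ s) :
    a^2 + s*a + (1 - 2*a*m)*(s*m + m^2) ≤ 3 := by
  have hs' : s ≤ 17321/10000 := by nlinarith
  have hs0 : 0 ≤ s := by linarith
  rcases le_or_gt m (1/2) with hm2 | hm2
  · have c1 : (1 - 2*m) * (s*m + m^2) ≤ 2 - s := cubic_core m s hm hm2 h3 hs
    have c2 : a * ((1 - 2*m) * (s*m + m^2)) ≤ a * (2 - s) :=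
      mul_le_mul_of_nonneg_left c1 ha
    have c4 : s*m + m^2 ≤ s/2 + 1/4 := by nlinarith
    have c5 : (1 - a) * (s*m + m^2) ≤ (1 - a) * (s/2 + 1/4) :=
      mul_le_mul_of_nonneg_left c4 (by linarith)
    nlinarith [mul_nonneg ha (by linarith : (0:ℝ) ≤ 1 - a)]
  · nlinarith [mul_nonneg hB (by nlinarith : (0:ℝ) ≤ s*m + m^2), mul_nonneg hB (by linarith : (0:ℝ) ≤ 2*m - 1), sq_nonneg (a-1), mul_nonneg ha hm, mul_nonneg (mul_nonneg ha hm) hB]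

private lemma claimA (a b X Y : ℝ) (ha : 0 < a) (ha1 : a ≤ 1) (hb : 0 < b) (hb1 : b ≤ 1)
    (hY : 0 ≤ Y) (hXY : X^2 + Y^2 = a^2*b^2) (hbX : b^2 - 2*X ≤ b) :
    a*(a^2 + b^2 - 2*X) + Real.sqrt 3 * (a^2 - X) - Y ≤ 3*a := by
  have h3 : (Real.sqrt 3)^2 = 3 := Real.sq_sqrt (by norm_num)
  set s := Real.sqrt 3 with hsdef
  have hs : 1 ≤ s := by nlinarith [Real.sqrt_nonneg 3]
  have hs' : s ≤ 7/4 := by nlinarith [Real.sqrt_nonneg 3]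
  have hs0 : 0 ≤ s := by linarith
  have hab : 0 < a*b := mul_pos ha hb
  rcases le_or_gt 0 X with hX | hX
  · have habs : 0 ≤ s*X + Y := by
      have := mul_nonneg hs0 hX; linarith
    have h1 : (a*b)^2 ≤ (s*X + Y)^2 := by
      nlinarith [mul_nonneg (mul_nonneg hs0 hX) hY, sq_nonneg X]
    have key : a*b ≤ s*X + Y := by nlinarith [h1, habs, hab]
    nlinarith [mul_nonneg ha.le hX, mul_nonneg hab.le (by linarith : (0:ℝ) ≤ 1 - b), mul_nonneg ha.le (by nlinarith : (0:ℝ) ≤ 3 - a^2 - s*a)]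
  · obtain ⟨m, hXm⟩ : ∃ m, X = -(a*b*m) := ⟨-X/(a*b), by field_simp⟩
    obtain ⟨r, hYr⟩ : ∃ r, Y = a*b*r := ⟨Y/(a*b), by field_simp⟩
    subst hXm; subst hYr
    have hm : 0 < m := by
      rcases le_or_gt m 0 with h | h
      · exfalso; nlinarith [mul_nonneg hab.le (neg_nonneg.mpr h)]
      · exact h
    have hr : 0 ≤ r := by
      rcases le_or_gt 0 r with h | h
      · exact h
      · exfalso; nlinarith [mul_pos hab (neg_pos.mpr h)]
    have hmr : m^2 + r^2 = 1 := by
      have h2 : (m^2 + r^2)*(a*b)^2 = 1*(a*b)^2 := by linear_combination hXY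
      exact mul_right_cancel₀ (by positivity) h2
    have hm1 : m ≤ 1 := by nlinarith
    have hr1 : r ≤ 1 := by nlinarith
    have hrm : 1 - m^2 ≤ r := by nlinarith
    have hb2am : b + 2*a*m ≤ 1 := by
      have h1 : b*(b + 2*a*m) ≤ b*1 := by nlinarith
      exact le_of_mul_le_mul_left h1 hb
    have hB : 0 ≤ 1 - 2*a*m := by linarith
    have hc2 := claim2 a m s ha.le ha1 hm.le hm1 hB h3 hs
    have hE : a^2 + b^2 + 2*a*b*m + s*a + s*b*m - b*r ≤ 3 := by
      have e1 : b*(b + 2*a*m) ≤ b*1 := mul_le_mul_of_nonneg_left hb2am hb.le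
      have e2 : b*(1 + s*m - r) ≤ (1 - 2*a*m)*(1 + s*m - r) := by
        apply mul_le_mul_of_nonneg_right (by linarith)
        nlinarith [mul_nonneg hs0 hm.le]
      have e3 : (1 - 2*a*m)*(1 + s*m - r) ≤ (1 - 2*a*m)*(s*m + m^2) :=
        mul_le_mul_of_nonneg_left (by linarith) hB
      nlinarith [hc2, e1, e2, e3]
    have hEa := mul_le_mul_of_nonneg_left hE ha.le
    nlinarith [hEa]


private lemma trigTL (r3 x s y t : ℝ) (h3 : r3^2 = 3) (hr3 : 1 ≤ r3)
    (hx : x^2 + s^2 = 1) (hy : y^2 + t^2 = 1) (hs : 0 ≤ s) (ht : 0 ≤ t)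
    (h1 : -(r3/2) ≤ x*y - s*t) (h2 : 0 ≤ x*t + s*y) (hor : 0 < x ∨ 0 < y) :
    0 ≤ 2*x + r3*y - t := by
  obtain ⟨c, hcdef⟩ : ∃ c, c = x*y - s*t := ⟨_, rfl⟩
  obtain ⟨σ, hσdef⟩ : ∃ σ, σ = x*t + s*y := ⟨_, rfl⟩
  have h1' : -(r3/2) ≤ c := by rw [hcdef]; exact h1
  have h2' : 0 ≤ σ := by rw [hσdef]; exact h2
  have hcs : c^2 + σ^2 = 1 := by
    rw [hcdef, hσdef]; linear_combination (y^2+t^2)*hx + hy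
  have hxid : x = c*y + σ*t := by
    rw [hcdef, hσdef]; linear_combination (-x)*hy
  have hss : 0 ≤ σ*y - c*t := by
    have hh : s = σ*y - c*t := by rw [hcdef, hσdef]; linear_combination (-s)*hy
    linarith [hh ▸ hs]
  have hσ1 : σ ≤ 1 := by nlinarith [sq_nonneg c]
  rcases le_or_gt 0 y with hy0 | hy0
  · rcases le_or_gt (1/2) σ with hσ | hσ
    · have h2c : 0 ≤ 2*c + r3 := by linarith
      nlinarith [mul_nonneg h2c hy0, mul_nonneg ht (by linarith : (0:ℝ) ≤ 2*σ - 1)]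
    · have hc : r3/2 ≤ c := by nlinarith [h1']
      rcases eq_or_lt_of_le h2' with hσ0 | hσ0
      · have hσz : σ = 0 := hσ0.symm
        have hc1 : c = 1 := by nlinarith
        have ht00 : t = 0 := by rw [hσz, hc1] at hss; nlinarith
        rw [hxid, hσz, hc1, ht00]; nlinarith
      · have hrc : 3/2 ≤ r3*c := by nlinarith
        have hkey : (0:ℝ) ≤ 2 + r3*c - σ := by linarith
        have hmain : σ*0 ≤ σ * (2*x + r3*y - t) := by
          nlinarith [mul_nonneg (by linarith : (0:ℝ) ≤ 2*c + r3) hss, mul_nonneg ht hkey]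
        have := le_of_mul_le_mul_left hmain hσ0
        linarith
  · have hx0 : 0 < x := by
      rcases hor with h | h
      · exact h
      · linarith
    have hσpos : 0 < σ := by
      rcases eq_or_lt_of_le h2' with hσ0 | hσ0
      · exfalso
        have hσz : σ = 0 := hσ0.symm
        have hc1 : c = 1 := by
          rcases le_or_gt c 0 with h | h
          · nlinarith
          · nlinarith
        have ht00 : t = 0 := by rw [hσz, hc1] at hss; nlinarith
        rw [hxid, hσz, hc1, ht00] at hx0; nlinarith
      · exact hσ0
    have htpos : 0 < t := by
      rcases eq_or_lt_of_le ht with h | h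
      · exfalso
        have ht00 : t = 0 := h.symm
        nlinarith [mul_pos hσpos (by linarith : (0:ℝ) < -y)]
      · exact h
    have hc0 : c < 0 := by nlinarith [mul_pos hσpos (by linarith : (0:ℝ) < -y)]
    have hσh : 1/2 ≤ σ := by
      nlinarith [mul_nonneg (by linarith : (0:ℝ) ≤ -c) (by linarith : (0:ℝ) ≤ c + r3/2)]
    have hkey : r3*(-c) + σ ≤ 2 := by nlinarith [sq_nonneg (2*(-c) - r3)]
    have hmain : (-c)*0 ≤ (-c) * (2*x + r3*y - t) := by
      nlinarith [mul_nonneg hss (by linarith : (0:ℝ) ≤ 2*σ - 1),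
        mul_nonneg (by linarith : (0:ℝ) ≤ -y) (by linarith : (0:ℝ) ≤ 2 - r3*(-c) - σ)]
    have := le_of_mul_le_mul_left hmain (by linarith : (0:ℝ) < -c)
    linarith



private lemma dsq (x y : Pt) : dist x y ^ 2 = (x 0 - y 0)^2 + (x 1 - y 1)^2 := by
  rw [EuclideanSpace.dist_eq, Real.sq_sqrt (by positivity)]
  rw [Fin.sum_univ_two]
  simp [Real.dist_eq, sq_abs]

private lemma iprod (x y : Pt) : (inner ℝ x y : ℝ) = x 0 * y 0 + x 1 * y 1 := by
  rw [PiLp.inner_apply, Fin.sum_univ_two]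
  simp [RCLike.inner_apply, mul_comm]

-- x in openSegment a b → dist a x ≤ dist a b
private lemma dist_left_le {a b x : Pt} (h : x ∈ openSegment ℝ a b) : dist a x ≤ dist a b := by
  rw [openSegment_eq_image] at h
  obtain ⟨θ, hθ, rfl⟩ := h
  rw [dist_eq_norm, dist_eq_norm]
  have : a - ((1 - θ) • a + θ • b) = θ • (a - b) := by
    rw [sub_smul, smul_sub, one_smul]; abel
  rw [this, norm_smul]
  simp only [Real.norm_eq_abs, abs_of_pos hθ.1]
  nlinarith [norm_nonneg (a - b), hθ.2]

-- coordinates of openSegment membership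
private lemma seg_coords {a b x : Pt} (h : x ∈ openSegment ℝ a b) :
    ∃ θ : ℝ, 0 < θ ∧ θ < 1 ∧ (∀ i, x i = (1 - θ) * a i + θ * b i) := by
  rw [openSegment_eq_image] at h
  obtain ⟨θ, hθ, rfl⟩ := h
  exact ⟨θ, hθ.1, hθ.2, fun i => by simp [PiLp.add_apply, PiLp.smul_apply, smul_eq_mul]⟩

private lemma inner_ge_of_angle {u v w : Pt} (hu : u ≠ w) (hv : u ≠ v)
    (hang : EuclideanGeometry.angle w u v ≤ 5 * π / 6) :
    -(Real.sqrt 3/2) * (dist u w * dist u v) ≤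
      (w 0 - u 0) * (v 0 - u 0) + (w 1 - u 1) * (v 1 - u 1) := by
  have hcos : Real.cos (5*π/6) ≤ Real.cos (EuclideanGeometry.angle w u v) := by
    apply Real.cos_le_cos_of_nonneg_of_le_pi (EuclideanGeometry.angle_nonneg _ _ _) (by linarith [Real.pi_pos]) hang
  have hval : Real.cos (5*π/6) = -(Real.sqrt 3/2) := by
    rw [show (5:ℝ)*π/6 = π - π/6 by ring, Real.cos_pi_sub, Real.cos_pi_div_six]
  rw [hval] at hcos
  have hinner := InnerProductGeometry.cos_angle_mul_norm_mul_norm (w - u) (v - u)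
  rw [EuclideanGeometry.angle] at hang
  have hwu : ‖w - u‖ = dist u w := by rw [← dist_eq_norm, dist_comm]
  have hvu : ‖v - u‖ = dist u v := by rw [← dist_eq_norm, dist_comm]
  have hico : (inner ℝ (w - u) (v - u) : ℝ) = (w 0 - u 0) * (v 0 - u 0) + (w 1 - u 1) * (v 1 - u 1) := by
    rw [iprod]
    simp [PiLp.sub_apply]
  have hangle : EuclideanGeometry.angle w u v = InnerProductGeometry.angle (w - u) (v - u) := by
    rw [EuclideanGeometry.angle]
    norm_num [vsub_eq_sub]
  rw [hangle] at hcos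
  calc -(Real.sqrt 3/2) * (dist u w * dist u v)
      ≤ Real.cos (InnerProductGeometry.angle (w - u) (v - u)) * (dist u w * dist u v) := by
        apply mul_le_mul_of_nonneg_right hcos (by positivity)
    _ = (w 0 - u 0) * (v 0 - u 0) + (w 1 - u 1) * (v 1 - u 1) := by
        rw [← hico, ← hinner, hwu, hvu]


private lemma eq_of_sq_eq (x y : ℝ) (hx : 0 ≤ x) (hy : 0 ≤ y) (h : x^2 = y^2) : x = y := by
  have := congrArg Real.sqrt h
  rwa [Real.sqrt_sq hx, Real.sqrt_sq hy] at this



private lemma bigScalar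
    (a0 a1 b0 b1 c0 c1 w0 w1 : ℝ)
    (σ τ μ ν S W L T U d : ℝ)
    (hσ : 0 < σ) (hσ1 : σ < 1) (hτ : 0 < τ) (hτ1 : τ < 1)
    (hμ : 0 < μ) (hμ1 : μ < 1) (hν : 0 < ν) (hν1 : ν < 1)
    (hS2 : S^2 = a0^2 + a1^2) (hS0 : 0 ≤ S) (hS1 : S ≤ 1) (hSpos : 0 < S)
    (hW2 : W^2 = w0^2 + w1^2) (hW0 : 0 ≤ W) (hW1 : W ≤ 1) (hWpos : 0 < W)
    (hL2 : L^2 = b0^2 + b1^2) (hL0 : 0 ≤ L)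
    (hT2 : T^2 = (c0-b0)^2 + (c1-b1)^2) (hT0 : 0 ≤ T) (hT1 : T ≤ 1)
    (hU2 : U^2 = c0^2 + c1^2) (hU0 : 0 ≤ U)
    (hd2 : d^2 = (w0-b0)^2 + (w1-b1)^2) (hd0 : 0 ≤ d)
    (htie1 : S < L) (htie2 : S < U)
    (hq0 : σ*a0 = b0 + τ*(c0-b0)) (hq1 : σ*a1 = b1 + τ*(c1-b1))
    (hp0 : μ*b0 = (1-ν)*w0 + ν*a0) (hp1 : μ*b1 = (1-ν)*w1 + ν*a1)
    (hang : -(Real.sqrt 3/2) * (W*S) ≤ w0*a0 + w1*a1) :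
    d ≤ 2 := by
  have h3 : (Real.sqrt 3)^2 = 3 := Real.sq_sqrt (by norm_num)
  obtain ⟨s3, hs3def⟩ : ∃ s3, s3 = Real.sqrt 3 := ⟨_, rfl⟩
  have h3' : s3^2 = 3 := by rw [hs3def]; exact h3
  have hs3nn : 0 ≤ s3 := by rw [hs3def]; exact Real.sqrt_nonneg 3
  have hs3 : 1 ≤ s3 := by nlinarith only [h3', hs3nn]
  rw [← hs3def] at hang
  obtain ⟨b, hb0, hb2⟩ : ∃ b, 0 ≤ b ∧ b^2 = (σ*a0-b0)^2 + (σ*a1-b1)^2 :=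
    ⟨Real.sqrt ((σ*a0-b0)^2 + (σ*a1-b1)^2), Real.sqrt_nonneg _, Real.sq_sqrt (by positivity)⟩
  have e0 : σ*a0 - b0 = τ*(c0-b0) := by linarith
  have e1 : σ*a1 - b1 = τ*(c1-b1) := by linarith
  have hbτ2 : b^2 = (τ*T)^2 := by
    linear_combination hb2 - τ^2*hT2 + (σ*a0-b0+τ*(c0-b0))*e0 + (σ*a1-b1+τ*(c1-b1))*e1
  have hbT : b = τ*T := eq_of_sq_eq _ _ hb0 (by positivity) hbτ2
  obtain ⟨X, hXdef⟩ : ∃ X, X = σ*(a0*(σ*a0-b0) + a1*(σ*a1-b1)) := ⟨_, rfl⟩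
  obtain ⟨CR, hCRdef⟩ : ∃ CR, CR = a0*b1 - a1*b0 := ⟨_, rfl⟩
  have hXY : X^2 + (σ*|CR|)^2 = (σ*S)^2 * b^2 := by
    rw [mul_pow σ |CR|, sq_abs, hXdef, hCRdef]
    linear_combination (-(σ^2*b^2))*hS2 + (-(σ^2*(a0^2+a1^2)))*hb2
  have hL2' : L^2 = (σ*S)^2 + b^2 - 2*X := by
    rw [hXdef]
    linear_combination hL2 - σ^2*hS2 - hb2
  have hS2pos : 0 < S^2 := by positivity
  have hσ2 : σ^2 < 1 := by nlinarith only [hσ, hσ1]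
  have hbpos : 0 < b := by
    rcases eq_or_lt_of_le hb0 with h | h
    · exfalso
      rw [← h] at hXY hL2'
      have hX0 : X = 0 := by nlinarith only [hXY, sq_nonneg (σ*|CR|), sq_nonneg X]
      rw [hX0] at hL2'
      have hSL : S^2 < L^2 := by nlinarith only [htie1, hS0]
      nlinarith only [hL2', hSL, hσ2, hS2pos]
    · exact h
  have hTpos : 0 < T := by
    by_contra h; push_neg at h
    have : τ*T ≤ 0 := mul_nonpos_iff.mpr (Or.inl ⟨hτ.le, h⟩)
    linarith [hbT ▸ hbpos]
  have hb1 : b ≤ 1 := by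
    have : τ*T ≤ τ*1 := mul_le_mul_of_nonneg_left hT1 hτ.le
    rw [hbT]; linarith
  -- U relation
  have hUb : τ^2*U^2 = τ^2*σ^2*S^2 + (1-τ)^2*b^2 + 2*τ*(1-τ)*X := by
    rw [hXdef]
    linear_combination τ^2*hU2 - σ^2*τ^2*hS2 - (1-τ)^2*hb2 - (τ*c0+σ*a0-(1-τ)*b0)*e0 - (τ*c1+σ*a1-(1-τ)*b1)*e1
  have hbbX : 0 < (1-τ)*b^2 + 2*τ*X := by
    have hU2S : S^2 < U^2 := by nlinarith only [htie2, hS0]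
    have hU2S' : τ^2*S^2 < τ^2*U^2 :=
      mul_lt_mul_of_pos_left hU2S (by positivity)
    have hq : τ^2*σ^2*S^2 < τ^2*S^2 := by
      have h1 : σ^2*(τ^2*S^2) < 1*(τ^2*S^2) :=
        mul_lt_mul_of_pos_right hσ2 (by positivity)
      nlinarith only [h1]
    have h1 : 0 < (1-τ)*((1-τ)*b^2 + 2*τ*X) := by nlinarith only [hUb, hU2S', hq]
    by_contra hE
    push_neg at hE
    nlinarith only [h1, mul_nonneg (by linarith : (0:ℝ) ≤ 1-τ) (by linarith : 0 ≤ -((1-τ)*b^2 + 2*τ*X))]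
  have hbX : b^2 - 2*X ≤ b := by
    have h1 : τ*(b^2 - 2*X) < b^2 := by nlinarith only [hbbX]
    have h2 : b^2 = τ*(T*b) := by rw [hbT]; ring
    have h4 : b^2 - 2*X ≤ T*b := le_of_mul_le_mul_left (by linarith) hτ
    have h5 : T*b ≤ 1*b := mul_le_mul_of_nonneg_right hT1 hbpos.le
    linarith
  have haS : 0 < σ*S := mul_pos hσ hSpos
  have haS1 : σ*S ≤ 1 := by nlinarith only [hσ, hσ1, hS0, hS1]
  have hA := claimA (σ*S) b X (σ*|CR|) haS haS1 hbpos hb1 (by positivity) hXY hbX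
  rw [← hs3def] at hA
  obtain ⟨IAB, hIABdef⟩ : ∃ I, I = a0*b0 + a1*b1 := ⟨_, rfl⟩
  have hXa : (σ*S)^2 - X = σ*IAB := by
    rw [hXdef, hIABdef]; linear_combination σ^2*hS2
  have hA' : S*L^2 + s3*IAB - |CR| ≤ 3*S := by
    have e : (σ*S)*((σ*S)^2 + b^2 - 2*X) + s3*((σ*S)^2 - X) - σ*|CR|
        = σ*(S*L^2 + s3*IAB - |CR|) := by rw [hXa, hL2']; ring
    have hApre : σ*(S*L^2 + s3*IAB - |CR|) ≤ σ*(3*S) := by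
      rw [← e]; linarith [hA]
    exact le_of_mul_le_mul_left hApre hσ
  have hσS2 : (σ*S)^2 ≤ 1 := pow_le_one₀ haS.le haS1
  have hL3 : L^2 ≤ 2 := by linarith [hL2', hbX, hσS2, hb1]
  have hLpos : 0 < L := lt_of_le_of_lt hSpos.le htie1
  -- trig part
  obtain ⟨IWB, hIWBdef⟩ : ∃ I, I = w0*b0 + w1*b1 := ⟨_, rfl⟩
  obtain ⟨CRWB, hCRWBdef⟩ : ∃ c, c = w0*b1 - w1*b0 := ⟨_, rfl⟩
  obtain ⟨CRWA, hCRWAdef⟩ : ∃ c, c = w0*a1 - w1*a0 := ⟨_, rfl⟩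
  obtain ⟨IWA, hIWAdef⟩ : ∃ I, I = w0*a0 + w1*a1 := ⟨_, rfl⟩
  have hsign1 : μ*CRWB = ν*CRWA := by
    rw [hCRWBdef, hCRWAdef]; linear_combination w0*hp1 - w1*hp0
  have hsign2 : μ*(-CR) = (1-ν)*CRWA := by
    rw [hCRdef, hCRWAdef]; linear_combination a1*hp0 - a0*hp1
  have hIW : IWB^2 + CRWB^2 = (W*L)^2 := by
    rw [hIWBdef, hCRWBdef]
    linear_combination (-(W^2))*hL2 + (-(b0^2+b1^2))*hW2
  have hIA : IAB^2 + CR^2 = (L*S)^2 := by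
    rw [hIABdef, hCRdef]
    linear_combination (-(L^2))*hS2 - (a0^2+a1^2)*hL2
  have hWL : 0 < W*L := mul_pos hWpos hLpos
  have hLS : 0 < L*S := mul_pos hLpos hSpos
  obtain ⟨x, hxdef⟩ : ∃ x, x = IWB/(W*L) := ⟨_, rfl⟩
  obtain ⟨ss, hssdef⟩ : ∃ s, s = |CRWB|/(W*L) := ⟨_, rfl⟩
  obtain ⟨y, hydef⟩ : ∃ y, y = IAB/(L*S) := ⟨_, rfl⟩
  obtain ⟨t, htdef⟩ : ∃ t, t = |CR|/(L*S) := ⟨_, rfl⟩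
  have hxs : x^2 + ss^2 = 1 := by
    rw [hxdef, hssdef, div_pow, div_pow, ← add_div, sq_abs, hIW]
    exact div_self (by positivity)
  have hyt : y^2 + t^2 = 1 := by
    rw [hydef, htdef, div_pow, div_pow, ← add_div, sq_abs, hIA]
    exact div_self (by positivity)
  have hssnn : 0 ≤ ss := by rw [hssdef]; positivity
  have htnn : 0 ≤ t := by rw [htdef]; positivity
  have hsgn : 0 ≤ CRWB * (-CR) := by
    have e : μ^2*(CRWB*(-CR)) = ν*(1-ν)*CRWA^2 := by
      calc μ^2*(CRWB*(-CR)) = (μ*CRWB)*(μ*(-CR)) := by ring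
        _ = (ν*CRWA)*((1-ν)*CRWA) := by rw [hsign1, hsign2]
        _ = ν*(1-ν)*CRWA^2 := by ring
    by_contra hcon; push_neg at hcon
    nlinarith only [e, mul_pos (mul_pos hμ hμ) (by linarith : 0 < -(CRWB*(-CR))),
      mul_nonneg (mul_nonneg hν.le (by linarith : (0:ℝ) ≤ 1-ν)) (sq_nonneg CRWA)]
  have hcomp : IWB*IAB - CRWB*(-CR) = IWA*L^2 := by
    rw [hIWBdef, hIABdef, hCRWBdef, hCRdef, hIWAdef]
    linear_combination (-(w0*a0+w1*a1))*hL2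
  have hcompcr : IWB*(-CR) + CRWB*IAB = CRWA*L^2 := by
    rw [hIWBdef, hIABdef, hCRWBdef, hCRdef, hCRWAdef]
    linear_combination (-(w0*a1-w1*a0))*hL2
  have habsprod : |CRWB| * |CR| = CRWB*(-CR) := by
    rw [← abs_mul, abs_of_nonpos (by linarith : CRWB*CR ≤ 0)]; ring
  have hTL1 : -(s3/2) ≤ x*y - ss*t := by
    have e : x*y - ss*t = IWA/(W*S) := by
      rw [hxdef, hydef, hssdef, htdef, div_mul_div_comm, div_mul_div_comm,
        div_sub_div_same, habsprod, hcomp,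
        show (W*L)*(L*S) = (W*S)*L^2 by ring,
        mul_div_mul_right _ _ (by positivity : (L:ℝ)^2 ≠ 0)]
    rw [e, le_div_iff₀ (mul_pos hWpos hSpos), hIWAdef]
    linarith [hang]
  have hTL2 : 0 ≤ x*t + ss*y := by
    have e : x*t + ss*y = (IWB * |CR| + |CRWB| * IAB)/((W*L)*(L*S)) := by
      rw [hxdef, hydef, hssdef, htdef, div_mul_div_comm, div_mul_div_comm, ← add_div]
    rw [e]
    apply div_nonneg _ (by positivity)
    rcases le_or_gt 0 CRWA with hca | hca
    · have hcrwb : 0 ≤ CRWB := by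
        by_contra hc; push_neg at hc
        nlinarith only [hsign1, mul_nonneg hν.le hca, mul_pos hμ (by linarith : 0 < -CRWB)]
      have hcr : CR ≤ 0 := by
        by_contra hc; push_neg at hc
        nlinarith only [hsign2, mul_nonneg (by linarith : (0:ℝ) ≤ 1-ν) hca,
          mul_pos hμ (by linarith : 0 < CR)]
      rw [abs_of_nonneg hcrwb, abs_of_nonpos hcr]
      have : IWB*(-CR) + CRWB*IAB = CRWA*L^2 := hcompcr
      nlinarith only [this, mul_nonneg hca (sq_nonneg L)]
    · have hcrwb : CRWB ≤ 0 := by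
        by_contra hc; push_neg at hc
        nlinarith only [hsign1, mul_pos hμ hc, mul_pos hν (by linarith : 0 < -CRWA)]
      have hcr : 0 ≤ CR := by
        by_contra hc; push_neg at hc
        nlinarith only [hsign2, mul_pos hμ (by linarith : 0 < -CR),
          mul_pos (by linarith : (0:ℝ) < 1-ν) (by linarith : 0 < -CRWA)]
      rw [abs_of_nonpos hcrwb, abs_of_nonneg hcr]
      nlinarith only [hcompcr, mul_nonneg (by linarith : 0 ≤ -CRWA) (sq_nonneg L)]
  have hor : 0 < x ∨ 0 < y := by
    have hsum : μ*((1-ν)*IWB + ν*IAB) = μ^2*L^2 := by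
      rw [hIWBdef, hIABdef]
      linear_combination (-(μ*b0))*hp0 + (-(μ*b1))*hp1 - μ^2*hL2
    have hsum' : (1-ν)*IWB + ν*IAB = μ*L^2 :=
      mul_left_cancel₀ (ne_of_gt hμ) (by rw [hsum]; ring)
    by_contra hcon
    push_neg at hcon
    obtain ⟨hx', hy'⟩ := hcon
    have hIWBn : IWB ≤ 0 := by
      have : IWB = x*(W*L) := by rw [hxdef]; field_simp
      rw [this]
      exact mul_nonpos_iff.mpr (Or.inr ⟨hx', hWL.le⟩)
    have hIABn : IAB ≤ 0 := by
      have : IAB = y*(L*S) := by rw [hydef]; field_simp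
      rw [this]
      exact mul_nonpos_iff.mpr (Or.inr ⟨hy', hLS.le⟩)
    nlinarith only [hsum', mul_nonneg (by linarith : (0:ℝ) ≤ 1-ν) (by linarith : 0 ≤ -IWB),
      mul_nonneg hν.le (by linarith : 0 ≤ -IAB), mul_pos hμ (mul_pos hLpos hLpos)]
  have hTL := trigTL s3 x ss y t h3' hs3 hxs hyt hssnn htnn hTL1 hTL2 hor
  -- dagger: W|CR| ≤ 2 S IWB + s3 W IAB
  have hWLS : 0 < W*L*S := by positivity
  have e1 : t*(W*L*S) = W*|CR| := by
    rw [htdef]; field_simp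
  have e2 : (2*x + s3*y)*(W*L*S) = 2*S*IWB + s3*(W*IAB) := by
    rw [hxdef, hydef]; field_simp
  have hdagger : W*|CR| ≤ 2*S*IWB + s3*(W*IAB) := by
    have h := mul_le_mul_of_nonneg_right (by linarith [hTL] : t ≤ 2*x + s3*y) hWLS.le
    rw [e1, e2] at h; exact h
  have hAW : W*(S*L^2 + s3*IAB - 3*S) ≤ W*|CR| := by
    apply mul_le_mul_of_nonneg_left _ hW0
    linarith [hA']
  have hkey : W*L^2 - 3*W - 2*IWB ≤ 0 := by
    have hc : S*(W*L^2 - 3*W - 2*IWB) ≤ S*0 := by nlinarith only [hAW, hdagger]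
    exact le_of_mul_le_mul_left hc hSpos
  have hW21 : W^2 ≤ 1 := pow_le_one₀ hW0 hW1
  have hWL3 : L^2 - 3 ≤ W*L^2 - 3*W := by
    nlinarith only [mul_nonneg (by linarith : (0:ℝ) ≤ 1-W) (by linarith : (0:ℝ) ≤ 3 - L^2)]
  have hd2' : d^2 = W^2 + L^2 - 2*IWB := by
    rw [hIWBdef]
    linear_combination hd2 - hW2 - hL2
  have hd4 : d^2 ≤ 4 := by linarith
  nlinarith only [hd4, hd0]


theorem stmt11 (u v u' v' w : Pt)
    (htie : Tie u v u' v')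
    (huv : dist u v ≤ 1) (huv' : dist u' v' ≤ 1)
    (huw : dist u w ≤ 1)
    (hang : EuclideanGeometry.angle w u v ≤ 5 * π / 6)
    (hcross : Crosses u' u w v) :
    dist w u' ≤ 2 := by
  obtain ⟨⟨q, hq1s, hq2s⟩, ht1, ht2, ht3⟩ := htie
  obtain ⟨p, hp1s, hp2s⟩ := hcross
  by_cases hueqv : u = v
  · subst hueqv
    rw [openSegment_same] at hq1s
    have hq : q = u := Set.mem_singleton_iff.mp hq1s
    subst hq
    have h1 : dist u' q ≤ dist u' v' := dist_left_le hq2s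
    calc dist w u' ≤ dist w q + dist q u' := dist_triangle _ _ _
      _ = dist q w + dist u' q := by rw [dist_comm w q, dist_comm q u']
      _ ≤ 1 + 1 := by
          have : dist q w ≤ 1 := huw
          linarith [h1, huv']
      _ = 2 := by norm_num
  · by_cases huew : u = w
    · subst huew
      have h1 : dist u q ≤ dist u v := dist_left_le hq1s
      have h2 : dist u' q ≤ dist u' v' := dist_left_le hq2s
      calc dist u u' ≤ dist u q + dist q u' := dist_triangle _ _ _
        _ = dist u q + dist u' q := by rw [dist_comm q u']
        _ ≤ 1 + 1 := by linarith [huv, huv']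
        _ = 2 := by norm_num
    · -- main case
      obtain ⟨σ, hσ0, hσ1, hqc⟩ := seg_coords hq1s
      obtain ⟨τ, hτ0, hτ1, hqc'⟩ := seg_coords hq2s
      obtain ⟨θ, hθ0, hθ1, hpc⟩ := seg_coords hp1s
      obtain ⟨ν, hν0, hν1, hpc'⟩ := seg_coords hp2s
      have hSpos : 0 < dist u v := dist_pos.mpr hueqv
      have hWpos : 0 < dist u w := dist_pos.mpr huew
      have hangle := inner_ge_of_angle huew hueqv hang
      refine bigScalar (v 0 - u 0) (v 1 - u 1) (u' 0 - u 0) (u' 1 - u 1)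
        (v' 0 - u 0) (v' 1 - u 1) (w 0 - u 0) (w 1 - u 1)
        σ τ (1-θ) ν (dist u v) (dist u w) (dist u u') (dist u' v') (dist u v') (dist w u')
        hσ0 hσ1 hτ0 hτ1 (by linarith) (by linarith) hν0 hν1
        (by rw [dsq]; ring) dist_nonneg huv hSpos
        (by rw [dsq]; ring) dist_nonneg huw hWpos
        (by rw [dsq]; ring) dist_nonneg
        (by rw [dsq]; ring) dist_nonneg huv'
        (by rw [dsq]; ring) dist_nonneg
        (by rw [dsq]; ring) dist_nonneg
        ht1 ht2 ?_ ?_ ?_ ?_ ?_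
      · linear_combination (hqc' 0) - (hqc 0)
      · linear_combination (hqc' 1) - (hqc 1)
      · linear_combination (hpc' 0) - (hpc 0)
      · linear_combination (hpc' 1) - (hpc 1)
      · exact hangle
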